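/- Let A be an algebra, M, N finite-dimensional A-modules, M₁ ⊆ M and N₁ ⊆ N submodules. An extension class ε ∈ Ext¹_A(M, N) with representative 0 → N →^ι L →^π M → 0 admits a submodule L₁ ⊆ L with ι^{-1}(L₁) = N₁ and π(L₁) = M₁ if and only if the pulled-back and restricted class ι_{M₁}^*(ε) ∈ Ext¹_A(M₁, N) lies in the image of (ι_{N₁})_* : Ext¹_A(M₁, N₁) → Ext¹_A(M₁, N), where ι_{M₁} : M₁ → M and ι_{N₁} : N₁ → N are the inclusions. -/

import Mathlib

open LinearMap

/-- Let `ε ∈ Ext¹(M, N)` be represented by a cocycle `d`, with middle term `L(d)`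
(the representation with spaces `N_v × M_v` and maps `(n,m) ↦ (N_e n + d_e m, M_e m)`),
and let `M₁ ⊆ M`, `N₁ ⊆ N` be subrepresentations. Then `L(d)` has a subrepresentation `L₁`
with `ι⁻¹(L₁) = N₁` and `π(L₁) = M₁` if and only if the restriction of `d` to `M₁` differs
from the pushforward of a cocycle `d'` for extensions of `M₁` by `N₁` by a coboundary,
i.e. `ι_{M₁}^*(ε)` lies in the image of `(ι_{N₁})_* : Ext¹(M₁, N₁) → Ext¹(M₁, N)`. -/
theorem submodule_of_middle_term_iff_restriction_in_pushforward_image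
    (k : Type*) [Field k] (V E : Type*) (s t : E → V)
    (M N : V → Type*)
    [∀ v, AddCommGroup (M v)] [∀ v, Module k (M v)]
    [∀ v, AddCommGroup (N v)] [∀ v, Module k (N v)]
    (Mf : ∀ e, M (s e) →ₗ[k] M (t e)) (Nf : ∀ e, N (s e) →ₗ[k] N (t e))
    (M₁ : ∀ v, Submodule k (M v)) (N₁ : ∀ v, Submodule k (N v))
    (hM₁ : ∀ e, ∀ x ∈ M₁ (s e), Mf e x ∈ M₁ (t e))
    (hN₁ : ∀ e, ∀ x ∈ N₁ (s e), Nf e x ∈ N₁ (t e))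
    (d : ∀ e, M (s e) →ₗ[k] N (t e))
    (Ld : ∀ e, (N (s e) × M (s e)) →ₗ[k] (N (t e) × M (t e)))
    (hLd : Ld = fun e =>
      ((Nf e).comp (LinearMap.fst k (N (s e)) (M (s e)))
          + (d e).comp (LinearMap.snd k (N (s e)) (M (s e)))).prod
        ((Mf e).comp (LinearMap.snd k (N (s e)) (M (s e))))) :
    (∃ L₁ : ∀ v, Submodule k (N v × M v),
        (∀ e, ∀ x ∈ L₁ (s e), Ld e x ∈ L₁ (t e)) ∧
        (∀ v, (L₁ v).comap (LinearMap.inl k (N v) (M v)) = N₁ v) ∧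
        (∀ v, (L₁ v).map (LinearMap.snd k (N v) (M v)) = M₁ v))
      ↔
    (∃ (d' : ∀ e, (M₁ (s e)) →ₗ[k] (N₁ (t e))) (φ : ∀ v, (M₁ v) →ₗ[k] N v),
        ∀ e, (d e).comp (M₁ (s e)).subtype =
          (N₁ (t e)).subtype.comp (d' e)
            + (φ (t e)).comp ((Mf e).restrict (hM₁ e))
            - (Nf e).comp (φ (s e))) := by
  subst hLd
  constructor
  · rintro ⟨L₁, hinv, hcomap, hmap⟩
    have hφ : ∀ v, ∃ φv : (M₁ v) →ₗ[k] N v,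
        ∀ m : M₁ v, (φv m, (m : M v)) ∈ L₁ v := by
      intro v
      let p : (L₁ v) →ₗ[k] (M₁ v) :=
        ((LinearMap.snd k (N v) (M v)).comp (L₁ v).subtype).codRestrict (M₁ v)
          (fun x => by
            have : ((x : N v × M v).2) ∈ (L₁ v).map (LinearMap.snd k (N v) (M v)) :=
              ⟨x, x.2, rfl⟩
            rwa [hmap v] at this)
      have hsurj : Function.Surjective p := by
        intro m
        have hm : (m : M v) ∈ (L₁ v).map (LinearMap.snd k (N v) (M v)) := by
          rw [hmap v]; exact m.2
        obtain ⟨x, hx, hx2⟩ := hm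
        exact ⟨⟨x, hx⟩, Subtype.ext hx2⟩
      obtain ⟨σ, hσ⟩ := p.exists_rightInverse_of_surjective
        (LinearMap.range_eq_top.2 hsurj)
      refine ⟨((LinearMap.fst k (N v) (M v)).comp (L₁ v).subtype).comp σ, fun m => ?_⟩
      have h2 : ((σ m : N v × M v)).2 = (m : M v) := by
        have := LinearMap.congr_fun hσ m
        exact congrArg Subtype.val this
      have h3 : ((((LinearMap.fst k (N v) (M v)).comp (L₁ v).subtype).comp σ) m,
          (m : M v)) = ((σ m : N v × M v)) := by
        simp [← h2]
      rw [h3]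
      exact (σ m).2
    choose φ hφ using hφ
    have hmem : ∀ e, ∀ x : M₁ (s e),
        d e (x : M (s e)) + Nf e (φ (s e) x) - φ (t e) ((Mf e).restrict (hM₁ e) x)
          ∈ N₁ (t e) := by
      intro e x
      have ha : (φ (s e) x, (x : M (s e))) ∈ L₁ (s e) := hφ (s e) x
      have hb := hinv e _ ha
      have hc : (φ (t e) ((Mf e).restrict (hM₁ e) x),
          ((((Mf e).restrict (hM₁ e)) x : M (t e)))) ∈ L₁ (t e) :=
        hφ (t e) _
      have hd2 : (Nf e (φ (s e) x) + d e (x : M (s e))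
            - φ (t e) ((Mf e).restrict (hM₁ e) x), (0 : M (t e))) ∈ L₁ (t e) := by
        have := (L₁ (t e)).sub_mem hb hc
        simpa [Prod.ext_iff, sub_eq_iff_eq_add] using this
      have : (d e (x : M (s e)) + Nf e (φ (s e) x)
          - φ (t e) ((Mf e).restrict (hM₁ e) x), (0 : M (t e))) ∈ L₁ (t e) := by
        convert hd2 using 2
        abel
      have h5 := (hcomap (t e)).ge
      rw [← hcomap (t e)]
      simpa [Submodule.mem_comap] using this
    refine ⟨fun e => LinearMap.codRestrict (N₁ (t e))
      ((d e).comp (M₁ (s e)).subtype + (Nf e).comp (φ (s e))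
        - (φ (t e)).comp ((Mf e).restrict (hM₁ e))) (fun x => by simpa using hmem e x),
      φ, fun e => ?_⟩
    ext x
    simp only [LinearMap.comp_apply, LinearMap.add_apply, LinearMap.sub_apply,
      Submodule.coe_subtype, LinearMap.codRestrict_apply]
    abel
  · rintro ⟨d', φ, heq⟩
    refine ⟨fun v => LinearMap.range
      (((N₁ v).subtype.comp (LinearMap.fst k (N₁ v) (M₁ v))
          + (φ v).comp (LinearMap.snd k (N₁ v) (M₁ v))).prod
        ((M₁ v).subtype.comp (LinearMap.snd k (N₁ v) (M₁ v)))), ?_, ?_, ?_⟩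
    · rintro e x ⟨⟨n₁, m⟩, rfl⟩
      refine ⟨(⟨Nf e n₁, hN₁ e _ n₁.2⟩ + d' e m, (Mf e).restrict (hM₁ e) m), ?_⟩
      have hkey := LinearMap.congr_fun (heq e) m
      simp only [LinearMap.comp_apply, LinearMap.add_apply, LinearMap.sub_apply,
        Submodule.coe_subtype] at hkey ⊢
      refine Prod.ext ?_ ?_
      · simp only [LinearMap.prod_apply, Function.prod, LinearMap.comp_apply,
          LinearMap.add_apply, LinearMap.fst_apply, LinearMap.snd_apply,
          Submodule.coe_subtype, Submodule.coe_add, map_add, LinearMap.restrict_coe_apply]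
        rw [hkey]
        abel
      · simp [LinearMap.restrict_coe_apply]
    · intro v
      ext n
      simp only [Submodule.mem_comap, LinearMap.mem_range, LinearMap.inl_apply]
      constructor
      · rintro ⟨⟨n₁, m⟩, hx⟩
        have h1 := congrArg Prod.fst hx
        have h2 := congrArg Prod.snd hx
        simp only [LinearMap.prod_apply, Function.prod, LinearMap.comp_apply,
          LinearMap.add_apply, LinearMap.fst_apply, LinearMap.snd_apply,
          Submodule.coe_subtype] at h1 h2
        have hm : m = 0 := Subtype.ext h2
        rw [hm] at h1
        simp only [map_zero, add_zero] at h1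
        rw [← h1]
        exact n₁.2
      · intro hn
        refine ⟨(⟨n, hn⟩, 0), ?_⟩
        refine Prod.ext ?_ ?_ <;>
          simp [LinearMap.prod_apply]
    · intro v
      ext m
      simp only [Submodule.mem_map, LinearMap.mem_range, LinearMap.snd_apply]
      constructor
      · rintro ⟨x, ⟨⟨n₁, m₁⟩, rfl⟩, rfl⟩
        simp only [LinearMap.prod_apply, Pi.prod, LinearMap.comp_apply,
          Submodule.coe_subtype, LinearMap.snd_apply]
        exact m₁.2
      · intro hm
        exact ⟨((φ v) ⟨m, hm⟩, m), ⟨(0, ⟨m, hm⟩), by simp⟩, rfl⟩
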